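/- Let 𝔄 = [[𝒜, Cᵀ], [C, 0]] be invertible with 𝒜 SPSD, C full row rank, Ker(𝒜) ∩ Ker(C) = {0}, and let X be an m×p matrix of full column rank. Then the Schur complement Σ = −[0, −Xᵀ] 𝔄⁻¹ [0, −Xᵀ]ᵀ = −Xᵀ N X, where N is the (2,2) block of 𝔄⁻¹, is symmetric positive semidefinite; if moreover 𝒜 is positive definite, then Σ is symmetric positive definite. -/

import Mathlib

open Matrix

private lemma mulVec_inj_of_rank' {m p : ℕ} (X : Matrix (Fin m) (Fin p) ℝ) (hX : X.rank = p)
    {v : Fin p → ℝ} (hv : X *ᵥ v = 0) : v = 0 := by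
  have h := LinearMap.finrank_range_add_finrank_ker X.mulVecLin
  rw [Matrix.rank] at hX
  have hfin : Module.finrank ℝ (Fin p → ℝ) = p := by simp
  have hker : Module.finrank ℝ (LinearMap.ker X.mulVecLin) = 0 := by omega
  have hbot : LinearMap.ker X.mulVecLin = ⊥ := Submodule.finrank_eq_zero.mp hker
  have hv' : v ∈ LinearMap.ker X.mulVecLin := by simpa [Matrix.mulVecLin_apply] using hv
  rw [hbot] at hv'
  simpa using hv'

private lemma key' {n m : ℕ} (𝒜 : Matrix (Fin n) (Fin n) ℝ) (C : Matrix (Fin m) (Fin n) ℝ)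
    (h𝔄 : IsUnit (fromBlocks 𝒜 Cᵀ C (0 : Matrix (Fin m) (Fin m) ℝ))) (y : Fin m → ℝ) :
    ∃ x : Fin n → ℝ, C *ᵥ x = y ∧
      y ⬝ᵥ ((fromBlocks 𝒜 Cᵀ C (0 : Matrix (Fin m) (Fin m) ℝ))⁻¹.toBlocks₂₂ *ᵥ y)
        = -(x ⬝ᵥ (𝒜 *ᵥ x)) := by
  set M := fromBlocks 𝒜 Cᵀ C (0 : Matrix (Fin m) (Fin m) ℝ) with hM
  have hdet : IsUnit M.det := (Matrix.isUnit_iff_isUnit_det M).mp h𝔄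
  set w := M⁻¹ *ᵥ (Sum.elim (0 : Fin n → ℝ) y) with hwdef
  have hw : M *ᵥ w = Sum.elim (0 : Fin n → ℝ) y := by
    rw [hwdef, Matrix.mulVec_mulVec, Matrix.mul_nonsing_inv _ hdet, Matrix.one_mulVec]
  set x := w ∘ Sum.inl with hx
  set z := w ∘ Sum.inr with hz
  have hwe : w = Sum.elim x z := by
    funext i; cases i <;> rfl
  rw [hwe, hM, Matrix.fromBlocks_mulVec] at hw
  have h1 : 𝒜 *ᵥ x + Cᵀ *ᵥ z = 0 := by
    funext i; exact congrFun hw (Sum.inl i)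
  have h2 : C *ᵥ x = y := by
    funext i
    have := congrFun hw (Sum.inr i)
    simpa [Matrix.zero_mulVec] using this
  refine ⟨x, h2, ?_⟩
  have hNz : M⁻¹.toBlocks₂₂ *ᵥ y = z := by
    funext i
    simp only [Matrix.mulVec, Matrix.toBlocks₂₂, dotProduct, Matrix.of_apply]
    rw [hz]
    show _ = w (Sum.inr i)
    rw [hwdef]
    simp [Matrix.mulVec, dotProduct, Fintype.sum_sum_type]
  rw [hNz, ← h2]
  have hstep : (C *ᵥ x) ⬝ᵥ z = x ⬝ᵥ (Cᵀ *ᵥ z) := by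
    rw [Matrix.dotProduct_mulVec, Matrix.vecMul_transpose]
  rw [hstep]
  have h3 : Cᵀ *ᵥ z = -(𝒜 *ᵥ x) := by
    rw [eq_neg_iff_add_eq_zero, add_comm]; exact h1
  rw [h3, dotProduct_neg]

theorem stmt13 {n m p : ℕ}
    (𝒜 : Matrix (Fin n) (Fin n) ℝ) (h𝒜 : 𝒜.PosSemidef)
    (C : Matrix (Fin m) (Fin n) ℝ) (hC : C.rank = m)
    (hker : ∀ x : Fin n → ℝ, 𝒜.mulVec x = 0 → C.mulVec x = 0 → x = 0)
    (h𝔄 : IsUnit (Matrix.fromBlocks 𝒜 Cᵀ C (0 : Matrix (Fin m) (Fin m) ℝ)))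
    (X : Matrix (Fin m) (Fin p) ℝ) (hX : X.rank = p) :
    (-((Matrix.fromRows (0 : Matrix (Fin n) (Fin p) ℝ) (-X))ᵀ
        * (Matrix.fromBlocks 𝒜 Cᵀ C 0)⁻¹
        * Matrix.fromRows (0 : Matrix (Fin n) (Fin p) ℝ) (-X)))
      = -(Xᵀ * (Matrix.fromBlocks 𝒜 Cᵀ C (0 : Matrix (Fin m) (Fin m) ℝ))⁻¹.toBlocks₂₂ * X) ∧
    (-((Matrix.fromRows (0 : Matrix (Fin n) (Fin p) ℝ) (-X))ᵀ
        * (Matrix.fromBlocks 𝒜 Cᵀ C 0)⁻¹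
        * Matrix.fromRows (0 : Matrix (Fin n) (Fin p) ℝ) (-X))).PosSemidef ∧
    (𝒜.PosDef →
      (-((Matrix.fromRows (0 : Matrix (Fin n) (Fin p) ℝ) (-X))ᵀ
          * (Matrix.fromBlocks 𝒜 Cᵀ C 0)⁻¹
          * Matrix.fromRows (0 : Matrix (Fin n) (Fin p) ℝ) (-X))).PosDef) := by
  set M := Matrix.fromBlocks 𝒜 Cᵀ C (0 : Matrix (Fin m) (Fin m) ℝ) with hM
  set N := M⁻¹.toBlocks₂₂ with hN
  -- the identity
  have hid : (-((Matrix.fromRows (0 : Matrix (Fin n) (Fin p) ℝ) (-X))ᵀ * M⁻¹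
        * Matrix.fromRows (0 : Matrix (Fin n) (Fin p) ℝ) (-X))) = -(Xᵀ * N * X) := by
    ext i j
    simp [Matrix.mul_apply, Matrix.fromRows_apply_inl, Matrix.fromRows_apply_inr, Matrix.toBlocks₂₂, Fintype.sum_sum_type,
      Finset.mul_sum, Finset.sum_mul, mul_comm, mul_assoc, mul_left_comm, N]
  -- symmetry
  have hMH : M.IsHermitian := by
    rw [Matrix.IsHermitian]
    have h𝒜H : 𝒜ᴴ = 𝒜 := h𝒜.1
    ext (i | i) (j | j) <;>
      simp [hM, Matrix.conjTranspose_apply, Matrix.fromBlocks, Matrix.transpose_apply] <;>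
      first
      | exact congrFun (congrFun h𝒜H _) _
      | rfl
  have hNinv : M⁻¹.IsHermitian := hMH.inv
  have hNH : Nᴴ = N := by
    ext i j
    have := congrFun (congrFun hNinv (Sum.inr i)) (Sum.inr j)
    simpa [Matrix.toBlocks₂₂, Matrix.conjTranspose_apply, N] using this
  have hS : (-(Xᵀ * N * X)).IsHermitian := by
    rw [Matrix.IsHermitian]
    have : Xᵀ = Xᴴ := by ext i j; simp [Matrix.conjTranspose_apply]
    simp only [Matrix.conjTranspose_neg, neg_inj]
    rw [this, Matrix.conjTranspose_mul, Matrix.conjTranspose_mul, Matrix.conjTranspose_conjTranspose,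
      hNH, Matrix.mul_assoc]
  -- quadratic form
  have hquad : ∀ v : Fin p → ℝ, v ⬝ᵥ ((-(Xᵀ * N * X)) *ᵥ v)
      = -((X *ᵥ v) ⬝ᵥ (N *ᵥ (X *ᵥ v))) := by
    intro v
    rw [Matrix.neg_mulVec, dotProduct_neg, neg_inj, ← Matrix.mulVec_mulVec,
      ← Matrix.mulVec_mulVec, Matrix.dotProduct_mulVec v Xᵀ, Matrix.vecMul_transpose]
  have hpsd : ∀ v : Fin p → ℝ, 0 ≤ v ⬝ᵥ ((-(Xᵀ * N * X)) *ᵥ v) := by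
    intro v
    rw [hquad v]
    obtain ⟨x, -, hx⟩ := key' 𝒜 C h𝔄 (X *ᵥ v)
    rw [hx, neg_neg]
    have := h𝒜.dotProduct_mulVec_nonneg x
    simpa using this
  refine ⟨hid, ?_, ?_⟩
  · rw [hid]
    refine Matrix.PosSemidef.of_dotProduct_mulVec_nonneg hS fun v => ?_
    simpa using hpsd v
  · intro hPD
    rw [hid]
    refine Matrix.PosDef.of_dotProduct_mulVec_pos hS fun v hv => ?_
    have hXv : X *ᵥ v ≠ 0 := fun h => hv (mulVec_inj_of_rank' X hX h)
    obtain ⟨x, hCx, hx⟩ := key' 𝒜 C h𝔄 (X *ᵥ v)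
    have hxne : x ≠ 0 := by
      intro h; apply hXv; rw [← hCx, h, Matrix.mulVec_zero]
    have := hPD.dotProduct_mulVec_pos hxne
    have hlt : 0 < x ⬝ᵥ (𝒜 *ᵥ x) := by simpa using this
    have : v ⬝ᵥ ((-(Xᵀ * N * X)) *ᵥ v) > 0 := by
      rw [hquad v, hx, neg_neg]; exact hlt
    simpa using this
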